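/- Assume μ satisfies Assumption (D). Let m > 0 and let L be a compact subset of {z ∈ ℂ : U_μ(z) ≥ m}. Then there exist constants c₀ > 0 and c > 0 such that for all sufficiently large n, the probability that Λ_n ∩ L ⊆ ⋃_{k=1}^n B(X_k, e^{−c₀ n}) is at least 1 − e^{−cn}, where B(x, r) denotes the open disk of radius r centered at x. -/

import Mathlib

set_option maxHeartbeats 1000000

open MeasureTheory ProbabilityTheory Filter Metric
open scoped ENNReal

/-- Logarithmic potential of a measure on ℂ. -/
noncomputable def logPot (μ : Measure ℂ) (z : ℂ) : ℝ :=
  ∫ w, Real.log ‖z - w‖ ∂μ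

/-- Topological support of a measure on ℂ. -/
def msupport (μ : Measure ℂ) : Set ℂ :=
  {x : ℂ | ∀ U ∈ nhds x, 0 < μ U}

/-- Assumption (A): for every compact `K`, `sup_{z ∈ K} ∫ (log|z-w|)² dμ(w) < ∞`. -/
def AssumptionA (μ : Measure ℂ) : Prop :=
  ∀ K : Set ℂ, IsCompact K → ∃ C : ℝ, ∀ z ∈ K,
    ∫⁻ w, ENNReal.ofReal ((Real.log ‖z - w‖) ^ 2) ∂μ ≤ ENNReal.ofReal C

/-- Assumption (D): `μ(B(z,r)) ≤ C rᵉ` for all `z` and `r > 0`. -/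
def AssumptionD (μ : Measure ℂ) : Prop :=
  ∃ C : ℝ, ∃ ε : ℝ, 0 < ε ∧ ∀ z : ℂ, ∀ r : ℝ, 0 < r →
    μ (Metric.ball z r) ≤ ENNReal.ofReal (C * r ^ ε)

/-- The filled unit lemniscate of `p_n(z) = ∏_{k<n} (z - X k ω)`. -/
def lemniscate {Ω : Type*} (X : ℕ → Ω → ℂ) (n : ℕ) (ω : Ω) : Set ℂ :=
  {z : ℂ | ‖∏ k ∈ Finset.range n, (z - X k ω)‖ < 1}

/-- Inradius of a planar set: the sup of radii of open disks contained in it (0 if none). -/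
noncomputable def inradius (U : Set ℂ) : ℝ :=
  sSup {r : ℝ | 0 < r ∧ ∃ c : ℂ, Metric.ball c r ⊆ U}

/-- Taylor-type pointwise bound: `e^{-u} ≤ 1 - u + u²(1 + e^{-u})`. -/
lemma exp_neg_le_taylor (u : ℝ) : Real.exp (-u) ≤ 1 - u + u^2 * (1 + Real.exp (-u)) := by
  rcases le_or_gt 0 u with hu | hu
  · -- u ≥ 0 : exp(-u) ≤ 1 - u + u^2
    have h1 : Real.exp (-u) ≤ 1 - u + u^2 := by
      rcases le_or_gt u 1 with h | h
      · have hpos : (0:ℝ) < 1 + u := by linarith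
        have h2 : Real.exp (-u) * (1 + u) ≤ 1 := by
          have := Real.add_one_le_exp u
          calc Real.exp (-u) * (1 + u) ≤ Real.exp (-u) * Real.exp u := by
                nlinarith [Real.exp_pos (-u)]
            _ = 1 := by rw [← Real.exp_add]; simp
        have h3 : (1 - u + u^2) * (1 + u) = 1 + u^3 := by ring
        nlinarith [Real.exp_pos (-u)]
      · have : Real.exp (-u) ≤ 1 := Real.exp_le_one_iff.mpr (by linarith)
        nlinarith
    nlinarith [Real.exp_pos (-u), sq_nonneg u]
  · -- u < 0, set v = -u ≥ 0, show exp v ≤ 1 + v + v² exp v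
    set v := -u with hv
    have hv0 : 0 < v := by simp [hv]; linarith
    have key : Real.exp v - 1 ≤ v * Real.exp v := by
      have := Real.add_one_le_exp (-v)
      have hev : 0 < Real.exp v := Real.exp_pos v
      have : Real.exp v * (1 - v) ≤ 1 := by
        have h1 : 1 - v ≤ Real.exp (-v) := by linarith
        calc Real.exp v * (1 - v) ≤ Real.exp v * Real.exp (-v) := by nlinarith
          _ = 1 := by rw [← Real.exp_add]; simp
      nlinarith
    have key2 : Real.exp v - 1 - v ≤ v^2 * Real.exp v := by nlinarith
    have : Real.exp (-u) = Real.exp v := by rw [hv]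
    rw [this]
    have huv : u = -v := by rw [hv]; ring
    rw [huv]
    nlinarith [Real.exp_pos v]

/-- Lipschitz bound for log. -/
lemma abs_log_sub_log_le {a b c : ℝ} (ha : c ≤ a) (hb : c ≤ b) (hc : 0 < c) :
    |Real.log a - Real.log b| ≤ |a - b| / c := by
  have ha0 : 0 < a := lt_of_lt_of_le hc ha
  have hb0 : 0 < b := lt_of_lt_of_le hc hb
  have key : ∀ x y : ℝ, 0 < x → 0 < y → c ≤ y → Real.log x - Real.log y ≤ |x - y| / c := by
    intro x y hx hy hcy
    have h1 : Real.log x - Real.log y = Real.log (x / y) := (Real.log_div hx.ne' hy.ne').symm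
    rw [h1]
    have h2 : Real.log (x / y) ≤ x / y - 1 := Real.log_le_sub_one_of_pos (by positivity)
    have h3 : x / y - 1 = (x - y) / y := by field_simp
    have h4 : (x - y) / y ≤ |x - y| / c := by
      rcases le_or_gt x y with h | h
      · have : (x - y) / y ≤ 0 := div_nonpos_of_nonpos_of_nonneg (by linarith) hy.le
        have : (0:ℝ) ≤ |x - y| / c := by positivity
        linarith [div_nonpos_of_nonpos_of_nonneg (show x - y ≤ 0 by linarith) hy.le]
      · have hxy : |x - y| = x - y := abs_of_pos (by linarith)
        rw [hxy]
        exact div_le_div_of_nonneg_left (by linarith) hc hcy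
    linarith
  rcases le_total (Real.log a) (Real.log b) with h | h
  · rw [abs_of_nonpos (by linarith), abs_sub_comm]
    have := key b a hb0 ha0 ha
    linarith
  · rw [abs_of_nonneg (by linarith)]
    exact key a b ha0 hb0 hb

/-- `t ≤ (1/α) exp (α t)` for `t, α > 0`-ish; we use : for `0 ≤ t`, `t ≤ (1/α) * exp (α*t)`. -/
lemma le_exp_div {t α : ℝ} (ht : 0 ≤ t) (hα : 0 < α) : t ≤ Real.exp (α * t) / α := by
  have h := Real.add_one_le_exp (α * t)
  rw [le_div_iff₀ hα]
  nlinarith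

lemma sq_le_exp_div {t α : ℝ} (ht : 0 ≤ t) (hα : 0 < α) :
    t^2 ≤ (2/α)^2 * Real.exp (α * t) := by
  have h : α/2 * t ≤ Real.exp (α/2 * t) := by
    have := Real.add_one_le_exp (α/2 * t); linarith
  have h2 : (α/2 * t)^2 ≤ (Real.exp (α/2 * t))^2 := by
    have h0 : 0 ≤ α/2 * t := by positivity
    exact pow_le_pow_left₀ h0 h 2
  have h3 : (Real.exp (α/2 * t))^2 = Real.exp (α * t) := by
    rw [← Real.exp_nat_mul]; · norm_num; ring_nf
  rw [h3] at h2
  have hα2 : (0:ℝ) < α^2 := by positivity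
  have e1 : (α / 2 * t) ^ 2 = (α^2/4) * t^2 := by ring
  rw [e1] at h2
  calc t^2 = (4/α^2) * ((α^2/4) * t^2) := by field_simp
    _ ≤ (4/α^2) * Real.exp (α * t) := by
        apply mul_le_mul_of_nonneg_left h2 (by positivity)
    _ = (2/α)^2 * Real.exp (α * t) := by ring

/-- The complement of the support is null. -/
lemma msupport_ae (μ : Measure ℂ) : μ (msupport μ)ᶜ = 0 := by
  -- each x in the complement has an open nbhd of measure zero
  have h : ∀ x : ℂ, x ∈ (msupport μ)ᶜ → ∃ U : Set ℂ, IsOpen U ∧ x ∈ U ∧ μ U = 0 := by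
    intro x hx
    simp only [msupport, Set.mem_compl_iff, Set.mem_setOf_eq, not_forall] at hx
    obtain ⟨U, hU, hμU⟩ := hx
    obtain ⟨V, hVU, hVopen, hxV⟩ := _root_.mem_nhds_iff.mp hU
    exact ⟨V, hVopen, hxV, le_antisymm (le_trans (measure_mono hVU) (by simpa using hμU)) (zero_le)⟩
  classical
  -- choose for each x in compl such U
  let U : {x : ℂ // x ∈ (msupport μ)ᶜ} → Set ℂ := fun x => (h x x.2).choose
  have hUopen : ∀ x, IsOpen (U x) := fun x => (h x x.2).choose_spec.1
  have hUmem : ∀ x, (x:ℂ) ∈ U x := fun x => (h x x.2).choose_spec.2.1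
  have hUnull : ∀ x, μ (U x) = 0 := fun x => (h x x.2).choose_spec.2.2
  obtain ⟨T, hTc, hTeq⟩ := TopologicalSpace.isOpen_iUnion_countable U hUopen
  have hsub : (msupport μ)ᶜ ⊆ ⋃ x ∈ T, U x := by
    rw [hTeq]
    intro x hx
    exact Set.mem_iUnion.mpr ⟨⟨x, hx⟩, hUmem ⟨x, hx⟩⟩
  refine le_antisymm (le_trans (measure_mono hsub) ?_) (zero_le)
  have := measure_biUnion_null_iff (μ := μ) hTc (s := U)
  exact le_of_eq (this.mpr (fun x _ => hUnull x))

/-- Dyadic layer-cake moment bound from Assumption D. -/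
lemma moment_bound (μ : Measure ℂ) [IsProbabilityMeasure μ]
    {C ε : ℝ} (hC : 1 ≤ C) (hε : 0 < ε)
    (hD : ∀ z : ℂ, ∀ r : ℝ, 0 < r → μ (Metric.ball z r) ≤ ENNReal.ofReal (C * r ^ ε))
    {β : ℝ} (hβ0 : 0 < β) (hβε : β < ε) :
    ∃ K : ℝ, 1 ≤ K ∧ ∀ z : ℂ,
      ∫⁻ w, ENNReal.ofReal (Real.exp (-β * Real.log (‖z - w‖))) ∂μ
        ≤ ENNReal.ofReal K := by
  set r : ℝ := Real.exp (-(ε - β)) with hr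
  have hr1 : r < 1 := Real.exp_lt_one_iff.mpr (by linarith)
  have hr0 : 0 < r := Real.exp_pos _
  set K : ℝ := 1 + C * Real.exp β * (1 - r)⁻¹ with hK
  have hCe : (0:ℝ) ≤ C * Real.exp β := mul_nonneg (by linarith) (Real.exp_pos β).le
  have h1r0 : (0:ℝ) < 1 - r := by linarith
  have hK1 : 1 ≤ K := by
    have : 0 ≤ C * Real.exp β * (1 - r)⁻¹ := mul_nonneg hCe (by positivity)
    simp only [hK]; linarith
  refine ⟨K, hK1, fun z => ?_⟩
  -- pointwise bound
  have hpt : ∀ w : ℂ, ENNReal.ofReal (Real.exp (-β * Real.log (‖z - w‖)))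
      ≤ 1 + ∑' j : ℕ, (Metric.ball z (Real.exp (-(j:ℝ)))).indicator
          (fun _ => ENNReal.ofReal (Real.exp (β * ((j:ℝ)+1)))) w := by
    intro w
    set x : ℝ := ‖z - w‖ with hx
    have hx0 : 0 ≤ x := norm_nonneg _
    rcases eq_or_lt_of_le hx0 with h0 | h0
    · -- x = 0
      have : Real.log x = 0 := by rw [← h0]; simp
      rw [this]
      exact le_add_of_le_of_nonneg (by simp) (zero_le)
    rcases le_or_gt 1 x with h1 | h1
    · -- x ≥ 1 : integrand ≤ 1
      have : -β * Real.log x ≤ 0 := by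
        have := Real.log_nonneg h1
        nlinarith
      have : Real.exp (-β * Real.log x) ≤ 1 := Real.exp_le_one_iff.mpr this
      exact le_add_of_le_of_nonneg (by simpa using ENNReal.ofReal_le_one.mpr this) (zero_le)
    · -- 0 < x < 1
      set t : ℝ := -Real.log x with ht
      have ht0 : 0 < t := by
        simp only [ht]
        have := Real.log_neg h0 h1
        linarith
      have hceil : 1 ≤ ⌈t⌉ := by exact_mod_cast Int.one_le_ceil_iff.mpr ht0
      set j : ℕ := (⌈t⌉ - 1).toNat with hj
      have hjz : (j:ℤ) = ⌈t⌉ - 1 := by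
        rw [hj]; exact Int.toNat_of_nonneg (by omega)
      have hjcast : (j : ℝ) = (⌈t⌉ : ℝ) - 1 := by exact_mod_cast congrArg (Int.cast : ℤ → ℝ) hjz
      have hjt : (j:ℝ) < t := by rw [hjcast]; have := Int.ceil_lt_add_one t; linarith
      have htj1 : t ≤ (j:ℝ) + 1 := by rw [hjcast]; have := Int.le_ceil t; linarith
      -- w ∈ ball z (exp (-j))
      have hmem : w ∈ Metric.ball z (Real.exp (-(j:ℝ))) := by
        rw [Metric.mem_ball, dist_comm, Complex.dist_eq, ← hx]
        have : x = Real.exp (Real.log x) := (Real.exp_log h0).symm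
        rw [this]
        exact Real.exp_lt_exp.mpr (by simp only [ht] at hjt; linarith)
      have hval : Real.exp (-β * Real.log x) ≤ Real.exp (β * ((j:ℝ)+1)) := by
        apply Real.exp_le_exp.mpr
        have : -β * Real.log x = β * t := by rw [ht]; ring
        rw [this]
        exact mul_le_mul_of_nonneg_left htj1 hβ0.le
      calc ENNReal.ofReal (Real.exp (-β * Real.log x))
          ≤ ENNReal.ofReal (Real.exp (β * ((j:ℝ)+1))) := ENNReal.ofReal_le_ofReal hval
        _ = (Metric.ball z (Real.exp (-(j:ℝ)))).indicator
              (fun _ => ENNReal.ofReal (Real.exp (β * ((j:ℝ)+1)))) w := by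
            rw [Set.indicator_of_mem hmem]
        _ ≤ ∑' i : ℕ, (Metric.ball z (Real.exp (-(i:ℝ)))).indicator
              (fun _ => ENNReal.ofReal (Real.exp (β * ((i:ℝ)+1)))) w := ENNReal.le_tsum j
        _ ≤ 1 + _ := le_add_self
  calc ∫⁻ w, ENNReal.ofReal (Real.exp (-β * Real.log (‖z - w‖))) ∂μ
      ≤ ∫⁻ w, (1 + ∑' j : ℕ, (Metric.ball z (Real.exp (-(j:ℝ)))).indicator
          (fun _ => ENNReal.ofReal (Real.exp (β * ((j:ℝ)+1)))) w) ∂μ := lintegral_mono hpt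
    _ = 1 + ∑' j : ℕ, ENNReal.ofReal (Real.exp (β * ((j:ℝ)+1))) * μ (Metric.ball z (Real.exp (-(j:ℝ)))) := by
        rw [lintegral_add_left measurable_const]
        simp only [lintegral_const, measure_univ, mul_one, one_mul]
        congr 1
        rw [lintegral_tsum (fun j => ((measurable_const).indicator measurableSet_ball).aemeasurable)]
        congr 1
        ext j
        rw [lintegral_indicator measurableSet_ball]
        simp [Measure.restrict_apply MeasurableSet.univ]
    _ ≤ 1 + ∑' j : ℕ, ENNReal.ofReal (C * Real.exp β) * ENNReal.ofReal r ^ j := by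
        refine add_le_add_right (ENNReal.tsum_le_tsum fun j => ?_) 1
        calc ENNReal.ofReal (Real.exp (β * ((j:ℝ)+1))) * μ (Metric.ball z (Real.exp (-(j:ℝ))))
            ≤ ENNReal.ofReal (Real.exp (β * ((j:ℝ)+1))) * ENNReal.ofReal (C * Real.exp (-(j:ℝ)) ^ ε) := by
              gcongr
              exact hD z _ (Real.exp_pos _)
          _ = ENNReal.ofReal (Real.exp (β * ((j:ℝ)+1)) * (C * Real.exp (-(j:ℝ)) ^ ε)) := by
              rw [ENNReal.ofReal_mul (Real.exp_pos _).le]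
          _ = ENNReal.ofReal (C * Real.exp β * r ^ j) := by
              congr 1
              rw [← Real.exp_log (Real.exp_pos (-(j:ℝ))), Real.log_exp,
                Real.rpow_def_of_pos (Real.exp_pos _), Real.log_exp]
              rw [hr, ← Real.exp_nat_mul]
              have e : Real.exp (β * ((j:ℝ) + 1)) * Real.exp (-(j:ℝ) * ε)
                  = Real.exp β * Real.exp ((j:ℝ) * -(ε - β)) := by
                rw [← Real.exp_add, ← Real.exp_add]; ring_nf
              linear_combination C * e
          _ = ENNReal.ofReal (C * Real.exp β) * ENNReal.ofReal r ^ j := by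
              rw [← ENNReal.ofReal_pow hr0.le, ← ENNReal.ofReal_mul hCe]
    _ = 1 + ENNReal.ofReal (C * Real.exp β) * (1 - ENNReal.ofReal r)⁻¹ := by
        rw [ENNReal.tsum_mul_left, ENNReal.tsum_geometric]
    _ ≤ ENNReal.ofReal K := by
        rw [hK]
        have h1r : (1 : ENNReal) - ENNReal.ofReal r = ENNReal.ofReal (1 - r) := by
          rw [ENNReal.ofReal_sub _ hr0.le]; simp
        rw [h1r, ← ENNReal.ofReal_inv_of_pos h1r0, ← ENNReal.ofReal_mul hCe,
          ENNReal.ofReal_add (by norm_num) (mul_nonneg hCe (by positivity))]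
        simp

lemma unif_moment (μ : Measure ℂ) [IsProbabilityMeasure μ] {ε K R m : ℝ}
    (hε : 0 < ε) (hK : 1 ≤ K) (hR : 1 ≤ R) (hm : 0 < m) (L : Set ℂ)
    (hmom : ∀ z : ℂ, ∫⁻ w, ENNReal.ofReal (Real.exp (-(ε/2) * Real.log (‖z - w‖))) ∂μ
      ≤ ENNReal.ofReal K)
    (hbd : ∀ z ∈ L, ∀ᵐ w ∂μ, ‖z - w‖ ≤ R)
    (hpot : ∀ z ∈ L, m ≤ ∫ w, Real.log (‖z - w‖) ∂μ) :
    ∃ lam : ℝ, 0 < lam ∧ lam ≤ ε/4 ∧ ∀ z ∈ L,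
      ∫⁻ w, ENNReal.ofReal (Real.exp (-lam * Real.log (‖z - w‖))) ∂μ
        ≤ ENNReal.ofReal (Real.exp (-(lam * m / 2))) := by
  have hlogR : 0 ≤ Real.log R := Real.log_nonneg hR
  set B : ℝ := (Real.log R)^2 + (8/ε)^2 * K with hB
  have hB0 : 0 < B := by positivity
  set lam : ℝ := min (ε/4) (m/(4*B)) with hlam
  have hlam0 : 0 < lam := lt_min (by positivity) (by positivity)
  have hlamε : lam ≤ ε/4 := min_le_left _ _
  have hlamB : lam * (2*B) ≤ m/2 := by
    have h1 : lam ≤ m/(4*B) := min_le_right _ _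
    have := mul_le_mul_of_nonneg_right h1 (show (0:ℝ) ≤ 2*B by positivity)
    calc lam * (2*B) ≤ m/(4*B) * (2*B) := this
      _ = m/2 := by field_simp; ring
  refine ⟨lam, hlam0, hlamε, fun z hz => ?_⟩
  -- notation
  set ℓ : ℂ → ℝ := fun w => Real.log (‖z - w‖) with hℓ
  have hℓmeas : Measurable ℓ :=
    Real.measurable_log.comp (Continuous.measurable (by continuity))
  set G : ℂ → ℝ := fun w => Real.exp (-(ε/2) * ℓ w) with hG
  have hGmeas : Measurable G := (Real.measurable_exp.comp (hℓmeas.const_mul _))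
  have hGpos : ∀ w, 0 < G w := fun w => Real.exp_pos _
  -- G is integrable with ∫ G ≤ K
  have hGint : Integrable G μ := by
    refine ⟨hGmeas.aestronglyMeasurable, ?_⟩
    rw [hasFiniteIntegral_iff_ofReal (ae_of_all _ (fun w => (hGpos w).le))]
    exact lt_of_le_of_lt (hmom z) ENNReal.ofReal_lt_top
  have hGint_le : ∫ w, G w ∂μ ≤ K := by
    have h1 : ∫ w, G w ∂μ = (∫⁻ w, ENNReal.ofReal (G w) ∂μ).toReal := by
      rw [integral_eq_lintegral_of_nonneg_ae (ae_of_all _ (fun w => (hGpos w).le))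
        hGmeas.aestronglyMeasurable]
    rw [h1]
    exact ENNReal.toReal_le_of_le_ofReal (by linarith) (hmom z)
  -- the four functions
  set f0 : ℂ → ℝ := fun w => Real.exp (-lam * ℓ w) with hf0
  set f2 : ℂ → ℝ := fun w => (ℓ w)^2 with hf2
  set f3 : ℂ → ℝ := fun w => (ℓ w)^2 * Real.exp (-lam * ℓ w) with hf3
  -- pointwise bounds valid whenever |z - w| ≤ R
  have hbds : ∀ w : ℂ, ‖z - w‖ ≤ R →
      |ℓ w| ≤ Real.log R + (2/ε) * G w ∧
      f2 w ≤ (Real.log R)^2 + (8/ε)^2 * G w ∧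
      f3 w ≤ (Real.log R)^2 + (8/ε)^2 * G w ∧
      f0 w ≤ 1 + G w := by
    intro w hw
    set x : ℝ := ‖z - w‖ with hx
    have hx0 : 0 ≤ x := norm_nonneg _
    rcases eq_or_lt_of_le hx0 with h0 | h0
    · have hlx : ℓ w = 0 := by simp only [hℓ, ← hx, ← h0]; simp
      have hGw : G w = 1 := by simp only [hG, hlx]; simp
      refine ⟨?_, ?_, ?_, ?_⟩ <;> simp only [hf0, hf2, hf3, hlx, hGw] <;> norm_num
      · positivity
      · positivity
      · positivity
    rcases le_or_gt 1 x with h1 | h1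
    · -- 1 ≤ x ≤ R
      have hl0 : 0 ≤ ℓ w := Real.log_nonneg h1
      have hlR : ℓ w ≤ Real.log R := Real.log_le_log h0 hw
      have hexp1 : Real.exp (-lam * ℓ w) ≤ 1 :=
        Real.exp_le_one_iff.mpr (by nlinarith)
      have hsq : (ℓ w)^2 ≤ (Real.log R)^2 := by nlinarith
      refine ⟨?_, ?_, ?_, ?_⟩
      · rw [abs_of_nonneg hl0]
        have : 0 ≤ (2/ε) * G w := by positivity
        linarith
      · have : 0 ≤ (8/ε)^2 * G w := by positivity
        simp only [hf2]; linarith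
      · simp only [hf3]
        have h2 : (ℓ w)^2 * Real.exp (-lam * ℓ w) ≤ (ℓ w)^2 := by nlinarith [sq_nonneg (ℓ w)]
        have : 0 ≤ (8/ε)^2 * G w := by positivity
        linarith
      · simp only [hf0]
        have : 0 < G w := hGpos w
        linarith
    · -- 0 < x < 1
      set t : ℝ := -ℓ w with ht
      have ht0 : 0 < t := by
        simp only [ht, hℓ, ← hx]
        have := Real.log_neg h0 h1
        linarith
      have hGt : G w = Real.exp ((ε/2) * t) := by
        simp only [hG, ht]; ring_nf
      refine ⟨?_, ?_, ?_, ?_⟩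
      · have h2 : |ℓ w| = t := by rw [ht]; rw [abs_of_nonpos (by linarith)]
        rw [h2, hGt]
        have := le_exp_div ht0.le (show (0:ℝ) < ε/2 by positivity)
        have heq : Real.exp (ε/2 * t) / (ε/2) = (2/ε) * Real.exp ((ε/2) * t) := by
          field_simp
        rw [heq] at this
        linarith
      · simp only [hf2, hGt]
        have h2 : (ℓ w)^2 = t^2 := by rw [ht]; ring
        rw [h2]
        have h3 := sq_le_exp_div ht0.le (show (0:ℝ) < ε/4 by positivity)
        have h4 : Real.exp (ε/4 * t) ≤ Real.exp ((ε/2) * t) :=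
          Real.exp_le_exp.mpr (by nlinarith)
        have h5 : (2/(ε/4))^2 = (8/ε)^2 := by
          rw [div_div_eq_mul_div]; norm_num
        rw [h5] at h3
        have h6 : (8/ε)^2 * Real.exp (ε/4 * t) ≤ (8/ε)^2 * Real.exp ((ε/2) * t) :=
          mul_le_mul_of_nonneg_left h4 (sq_nonneg _)
        nlinarith [sq_nonneg (Real.log R)]
      · simp only [hf3, hGt]
        have h2 : (ℓ w)^2 * Real.exp (-lam * ℓ w) = t^2 * Real.exp (lam * t) := by
          rw [ht]; ring_nf
        rw [h2]
        have h3 := sq_le_exp_div ht0.le (show (0:ℝ) < ε/4 by positivity)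
        have h5 : (2/(ε/4))^2 = (8/ε)^2 := by
          rw [div_div_eq_mul_div]; norm_num
        rw [h5] at h3
        have h7 : Real.exp (ε/4 * t) * Real.exp (lam * t) = Real.exp ((ε/4 + lam) * t) := by
          rw [← Real.exp_add]; ring_nf
        have h8 : Real.exp ((ε/4 + lam) * t) ≤ Real.exp ((ε/2) * t) := by
          apply Real.exp_le_exp.mpr
          have : ε/4 + lam ≤ ε/2 := by linarith
          exact mul_le_mul_of_nonneg_right this ht0.le
        have h9 : (0:ℝ) ≤ (8/ε)^2 := sq_nonneg _
        calc t^2 * Real.exp (lam * t) ≤ ((8/ε)^2 * Real.exp (ε/4 * t)) * Real.exp (lam * t) :=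
              mul_le_mul_of_nonneg_right h3 (Real.exp_pos _).le
          _ = (8/ε)^2 * Real.exp ((ε/4 + lam) * t) := by rw [mul_assoc, h7]
          _ ≤ (8/ε)^2 * Real.exp ((ε/2) * t) := mul_le_mul_of_nonneg_left h8 h9
          _ ≤ (Real.log R)^2 + (8/ε)^2 * Real.exp (ε/2 * t) := by nlinarith [sq_nonneg (Real.log R)]
      · simp only [hf0, hGt]
        have h2 : -lam * ℓ w = lam * t := by rw [ht]; ring
        rw [h2]
        have : Real.exp (lam * t) ≤ Real.exp ((ε/2) * t) := by
          apply Real.exp_le_exp.mpr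
          exact mul_le_mul_of_nonneg_right (by linarith) ht0.le
        linarith
  -- integrability
  have hae : ∀ᵐ w ∂μ, ‖z - w‖ ≤ R := hbd z hz
  have hdom : Integrable (fun w => (Real.log R)^2 + (8/ε)^2 * G w) μ :=
    (integrable_const _).add (hGint.const_mul _)
  have hdom1 : Integrable (fun w => Real.log R + (2/ε) * G w) μ :=
    (integrable_const _).add (hGint.const_mul _)
  have hf1int : Integrable ℓ μ := by
    refine Integrable.mono' hdom1 hℓmeas.aestronglyMeasurable ?_
    filter_upwards [hae] with w hw
    simpa [Real.norm_eq_abs] using (hbds w hw).1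
  have hf2int : Integrable f2 μ := by
    refine Integrable.mono' hdom (hℓmeas.pow_const 2).aestronglyMeasurable ?_
    filter_upwards [hae] with w hw
    rw [Real.norm_eq_abs, abs_of_nonneg (sq_nonneg _)]
    exact (hbds w hw).2.1
  have hf0meas : Measurable f0 := Real.measurable_exp.comp (hℓmeas.const_mul _)
  have hf3int : Integrable f3 μ := by
    refine Integrable.mono' hdom ((hℓmeas.pow_const 2).mul hf0meas).aestronglyMeasurable ?_
    filter_upwards [hae] with w hw
    rw [Real.norm_eq_abs, abs_of_nonneg (by positivity)]
    exact (hbds w hw).2.2.1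
  have hf0int : Integrable f0 μ := by
    refine Integrable.mono' ((integrable_const (1:ℝ)).add hGint) hf0meas.aestronglyMeasurable ?_
    filter_upwards [hae] with w hw
    rw [Real.norm_eq_abs, abs_of_nonneg (Real.exp_pos _).le]
    exact (hbds w hw).2.2.2
  -- integral bounds
  have hInt2 : ∫ w, f2 w ∂μ ≤ B := by
    calc ∫ w, f2 w ∂μ ≤ ∫ w, ((Real.log R)^2 + (8/ε)^2 * G w) ∂μ := by
          refine integral_mono_ae hf2int hdom ?_
          filter_upwards [hae] with w hw
          exact (hbds w hw).2.1
      _ = (Real.log R)^2 + (8/ε)^2 * ∫ w, G w ∂μ := by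
          rw [integral_add (integrable_const _) (hGint.const_mul _), integral_const,
            integral_const_mul]
          simp
      _ ≤ B := by
          rw [hB]
          have : (8/ε)^2 * ∫ w, G w ∂μ ≤ (8/ε)^2 * K :=
            mul_le_mul_of_nonneg_left hGint_le (sq_nonneg _)
          linarith
  have hInt3 : ∫ w, f3 w ∂μ ≤ B := by
    calc ∫ w, f3 w ∂μ ≤ ∫ w, ((Real.log R)^2 + (8/ε)^2 * G w) ∂μ := by
          refine integral_mono_ae hf3int hdom ?_
          filter_upwards [hae] with w hw
          exact (hbds w hw).2.2.1
      _ = (Real.log R)^2 + (8/ε)^2 * ∫ w, G w ∂μ := by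
          rw [integral_add (integrable_const _) (hGint.const_mul _), integral_const,
            integral_const_mul]
          simp
      _ ≤ B := by
          rw [hB]
          have : (8/ε)^2 * ∫ w, G w ∂μ ≤ (8/ε)^2 * K :=
            mul_le_mul_of_nonneg_left hGint_le (sq_nonneg _)
          linarith
  have hInt1 : m ≤ ∫ w, ℓ w ∂μ := hpot z hz
  -- main chain
  have hmain : ∫ w, f0 w ∂μ ≤ 1 - lam * m + lam^2 * (2*B) := by
    have hptw : ∀ w, f0 w ≤ 1 - lam * ℓ w + lam^2 * (f2 w + f3 w) := by
      intro w
      have := exp_neg_le_taylor (lam * ℓ w)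
      have he : -(lam * ℓ w) = -lam * ℓ w := by ring
      rw [he] at this
      calc f0 w ≤ 1 - lam * ℓ w + (lam * ℓ w)^2 * (1 + Real.exp (-lam * ℓ w)) := this
        _ = 1 - lam * ℓ w + lam^2 * (f2 w + f3 w) := by simp only [hf2, hf3]; ring
    have i1 : Integrable (fun w => 1 - lam * ℓ w) μ := by
      exact (integrable_const 1).sub (hf1int.const_mul lam)
    have i2 : Integrable (fun w => lam^2 * (f2 w + f3 w)) μ := by
      exact (hf2int.add hf3int).const_mul _
    have i3 : Integrable (fun w => lam * ℓ w) μ := hf1int.const_mul lam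
    have hrhs_int : Integrable (fun w => 1 - lam * ℓ w + lam^2 * (f2 w + f3 w)) μ := by
      exact i1.add i2
    calc ∫ w, f0 w ∂μ ≤ ∫ w, (1 - lam * ℓ w + lam^2 * (f2 w + f3 w)) ∂μ :=
          integral_mono hf0int hrhs_int hptw
      _ = 1 - lam * ∫ w, ℓ w ∂μ + lam^2 * (∫ w, f2 w ∂μ + ∫ w, f3 w ∂μ) := by
          rw [integral_add i1 i2, integral_sub (integrable_const 1) i3,
            MeasureTheory.integral_const_mul, MeasureTheory.integral_const_mul,
            integral_add hf2int hf3int, integral_const]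
          simp
      _ ≤ 1 - lam * m + lam^2 * (2*B) := by
          have h1 : lam * m ≤ lam * ∫ w, ℓ w ∂μ := mul_le_mul_of_nonneg_left hInt1 hlam0.le
          have h2 : ∫ w, f2 w ∂μ + ∫ w, f3 w ∂μ ≤ 2*B := by linarith
          have h3 : lam^2 * (∫ w, f2 w ∂μ + ∫ w, f3 w ∂μ) ≤ lam^2 * (2*B) :=
            mul_le_mul_of_nonneg_left h2 (sq_nonneg _)
          linarith
  have hfinal : ∫ w, f0 w ∂μ ≤ Real.exp (-(lam * m / 2)) := by
    have h1 : lam^2 * (2*B) ≤ lam * (m/2) := by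
      have := mul_le_mul_of_nonneg_left hlamB hlam0.le
      calc lam^2 * (2*B) = lam * (lam * (2*B)) := by ring
        _ ≤ lam * (m/2) := this
    have h2 : ∫ w, f0 w ∂μ ≤ 1 - lam * m / 2 := by
      calc ∫ w, f0 w ∂μ ≤ 1 - lam * m + lam^2 * (2*B) := hmain
        _ ≤ 1 - lam * m + lam * (m/2) := by linarith
        _ = 1 - lam * m / 2 := by ring
    have h3 : 1 - lam * m / 2 ≤ Real.exp (-(lam * m / 2)) := by
      have := Real.add_one_le_exp (-(lam * m / 2))
      linarith
    linarith
  -- convert to lintegral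
  have hconv : ∫⁻ w, ENNReal.ofReal (f0 w) ∂μ = ENNReal.ofReal (∫ w, f0 w ∂μ) :=
    (ofReal_integral_eq_lintegral_ofReal hf0int (ae_of_all _ (fun w => (Real.exp_pos _).le))).symm
  rw [show (fun w => ENNReal.ofReal (Real.exp (-lam * Real.log (‖z - w‖))))
      = fun w => ENNReal.ofReal (f0 w) by rfl]
  rw [hconv]
  exact ENNReal.ofReal_le_ofReal hfinal

/-- lintegral of a product of iid nonneg functions of independent rvs. -/
lemma lintegral_prod_indep {Ω : Type*} [MeasurableSpace Ω] (P : Measure Ω) [IsProbabilityMeasure P]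
    (X : ℕ → Ω → ℂ) (hmeas : ∀ i, Measurable (X i))
    (hindep : iIndepFun X P)
    (g : ℂ → ENNReal) (hg : Measurable g) (n : ℕ) :
    ∫⁻ ω, ∏ k ∈ Finset.range n, g (X k ω) ∂P
      = ∏ k ∈ Finset.range n, ∫⁻ ω, g (X k ω) ∂P := by
  have hind2 : iIndepFun (fun k ω => g (X k ω)) P :=
    hindep.comp (fun _ => g) (fun _ => hg)
  induction n with
  | zero => simp
  | succ n ih =>
    simp only [Finset.prod_range_succ]
    rw [← ih]
    have hIF : IndepFun (∏ j ∈ Finset.range n, fun ω => g (X j ω)) (fun ω => g (X n ω)) P :=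
      hind2.indepFun_prod_range_succ (fun i => hg.comp (hmeas i)) n
    have hfe : (∏ j ∈ Finset.range n, fun ω => g (X j ω))
        = fun ω => ∏ j ∈ Finset.range n, g (X j ω) := by
      funext ω; simp
    have hmf : Measurable (∏ j ∈ Finset.range n, fun ω => g (X j ω)) := by
      rw [hfe]; exact Finset.measurable_prod _ fun i _ => hg.comp (hmeas i)
    have key := lintegral_mul_eq_lintegral_mul_lintegral_of_indepFun hmf
      (hg.comp (hmeas n)) hIF
    rw [hfe] at key
    simpa [Function.comp, Pi.mul_apply] using key

lemma chernoff_pt {Ω : Type*} [MeasurableSpace Ω] (P : Measure Ω) [IsProbabilityMeasure P]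
    (μ : Measure ℂ) [IsProbabilityMeasure μ]
    (X : ℕ → Ω → ℂ) (hmeas : ∀ i, Measurable (X i))
    (hid : ∀ i, Measure.map (X i) P = μ)
    (hindep : iIndepFun X P)
    {lam m : ℝ} (hlam : 0 < lam) (z : ℂ)
    (hz : ∫⁻ w, ENNReal.ofReal (Real.exp (-lam * Real.log (‖z - w‖))) ∂μ
      ≤ ENNReal.ofReal (Real.exp (-(lam * m / 2)))) (n : ℕ) :
    P {ω | ∑ k ∈ Finset.range n, Real.log (‖z - X k ω‖) < n * m / 4}
      ≤ ENNReal.ofReal (Real.exp (-(lam * m / 4) * n)) := by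
  classical
  set g : ℂ → ENNReal := fun w => ENNReal.ofReal (Real.exp (-lam * Real.log (‖z - w‖)))
    with hgdef
  have hgmeas : Measurable g := by
    apply ENNReal.measurable_ofReal.comp
    apply Real.measurable_exp.comp
    exact ((Real.measurable_log.comp (Continuous.measurable (by continuity))).const_mul _)
  set f : Ω → ENNReal := fun ω => ∏ k ∈ Finset.range n, g (X k ω) with hfdef
  have hfmeas : Measurable f := Finset.measurable_prod _ (fun i _ => hgmeas.comp (hmeas i))
  have hfval : ∀ ω, f ω = ENNReal.ofReal
      (Real.exp (-lam * ∑ k ∈ Finset.range n, Real.log (‖z - X k ω‖))) := by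
    intro ω
    rw [hfdef]
    simp only [hgdef]
    rw [← ENNReal.ofReal_prod_of_nonneg (fun i _ => (Real.exp_pos _).le), ← Real.exp_sum]
    congr 1
    rw [Finset.mul_sum]
  set ε : ENNReal := ENNReal.ofReal (Real.exp (-lam * (n * m / 4))) with hεdef
  have hε0 : ε ≠ 0 := by
    simp [hεdef, ENNReal.ofReal_eq_zero, not_le, Real.exp_pos]
  have hεtop : ε ≠ ⊤ := ENNReal.ofReal_ne_top
  have hsub : {ω | ∑ k ∈ Finset.range n, Real.log (‖z - X k ω‖) < n * m / 4}
      ⊆ {ω | ε ≤ f ω} := by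
    intro ω hω
    simp only [Set.mem_setOf_eq] at hω ⊢
    rw [hfval ω, hεdef]
    apply ENNReal.ofReal_le_ofReal
    apply Real.exp_le_exp.mpr
    have := mul_le_mul_of_nonneg_left hω.le (by linarith : (0:ℝ) ≤ lam)
    nlinarith
  have hmarkov := mul_meas_ge_le_lintegral₀ hfmeas.aemeasurable ε (μ := P)
  have hprod : ∫⁻ ω, f ω ∂P ≤ ENNReal.ofReal (Real.exp (-(lam * m / 2))) ^ n := by
    rw [hfdef]
    rw [lintegral_prod_indep P X hmeas hindep g hgmeas n]
    calc ∏ k ∈ Finset.range n, ∫⁻ ω, g (X k ω) ∂P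
        = ∏ k ∈ Finset.range n, ∫⁻ w, g w ∂μ := by
          apply Finset.prod_congr rfl
          intro k _
          rw [← hid k, lintegral_map hgmeas (hmeas k)]
      _ ≤ ∏ _k ∈ Finset.range n, ENNReal.ofReal (Real.exp (-(lam * m / 2))) :=
          Finset.prod_le_prod' (fun k _ => hz)
      _ = ENNReal.ofReal (Real.exp (-(lam * m / 2))) ^ n := by
          rw [Finset.prod_const, Finset.card_range]
  have hP : P {ω | ∑ k ∈ Finset.range n, Real.log (‖z - X k ω‖) < n * m / 4}
      ≤ ε⁻¹ * ENNReal.ofReal (Real.exp (-(lam * m / 2))) ^ n := by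
    have h1 : P {ω | ∑ k ∈ Finset.range n, Real.log (‖z - X k ω‖) < n * m / 4}
        ≤ P {ω | ε ≤ f ω} := measure_mono hsub
    have h2 : ε * P {ω | ε ≤ f ω} ≤ ENNReal.ofReal (Real.exp (-(lam * m / 2))) ^ n :=
      le_trans hmarkov hprod
    have h3 : P {ω | ε ≤ f ω} ≤ ε⁻¹ * ENNReal.ofReal (Real.exp (-(lam * m / 2))) ^ n := by
      rw [← ENNReal.div_eq_inv_mul]
      exact ENNReal.le_div_iff_mul_le (Or.inl hε0) (Or.inl hεtop) |>.mpr
        (by rwa [mul_comm])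
    exact le_trans h1 h3
  refine le_trans hP (le_of_eq ?_)
  rw [hεdef, ← ENNReal.ofReal_inv_of_pos (Real.exp_pos _), ← Real.exp_neg,
    ← ENNReal.ofReal_pow (Real.exp_pos _).le, ← Real.exp_nat_mul,
    ← ENNReal.ofReal_mul (Real.exp_pos _).le, ← Real.exp_add]
  congr 1
  ring

lemma floor_eq_abs_lt {a b : ℝ} (hfl : ⌊a⌋ = ⌊b⌋) : |a - b| < 1 := by
  have h1 := Int.floor_le a
  have h2 := Int.lt_floor_add_one a
  have h3 := Int.floor_le b
  have h4 := Int.lt_floor_add_one b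
  rw [hfl] at h1 h2
  rw [abs_sub_lt_iff]
  constructor <;> linarith

lemma floor_div_bounds {a R h : ℝ} (hh : 0 < h) (ha : |a| ≤ R) :
    -⌈R/h⌉ ≤ ⌊a/h⌋ ∧ ⌊a/h⌋ ≤ ⌈R/h⌉ := by
  obtain ⟨h1, h2⟩ := abs_le.mp ha
  constructor
  · rw [Int.le_floor]
    push_cast
    have hRh : R/h ≤ (⌈R/h⌉:ℝ) := Int.le_ceil _
    have hd : -R/h ≤ a/h := (div_le_div_iff_of_pos_right hh).mpr h1
    have hneg : -(⌈R/h⌉:ℝ) ≤ -R/h := by rw [neg_div]; linarith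
    linarith
  · have h3 : (⌊a/h⌋:ℝ) ≤ a/h := Int.floor_le _
    have h4 : a/h ≤ R/h := (div_le_div_iff_of_pos_right hh).mpr h2
    have h5 : R/h ≤ (⌈R/h⌉:ℝ) := Int.le_ceil _
    exact_mod_cast le_trans h3 (le_trans h4 h5)

lemma abs_sub_le_of_floor_div_eq {a b h : ℝ} (hh : 0 < h) (hfl : ⌊a/h⌋ = ⌊b/h⌋) :
    |a - b| ≤ h := by
  have := floor_eq_abs_lt hfl
  have heq : a - b = (a/h - b/h) * h := by field_simp
  rw [heq, abs_mul, abs_of_pos hh]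
  nlinarith [abs_nonneg (a/h - b/h)]

lemma net_exists (L : Set ℂ) {R h : ℝ} (hR : 0 < R) (hh : 0 < h)
    (hLR : ∀ z ∈ L, ‖z‖ ≤ R) :
    ∃ t : Finset ℂ, (↑t ⊆ L) ∧ ((t.card : ℝ) ≤ (2*R/h + 3)^2) ∧
      ∀ z ∈ L, ∃ y ∈ t, ‖z - y‖ ≤ 2*h := by
  classical
  set idx : ℂ → ℤ × ℤ := fun z => (⌊z.re / h⌋, ⌊z.im / h⌋) with hidx
  set M : ℤ := ⌈R/h⌉ with hM
  have hM0 : 0 ≤ M := Int.ceil_nonneg (by positivity)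
  set I : Finset (ℤ × ℤ) := Finset.Icc (-M) M ×ˢ Finset.Icc (-M) M with hI
  set rep : ℤ × ℤ → ℂ := fun p => if hp : ∃ z ∈ L, idx z = p then hp.choose else 0 with hrep
  refine ⟨(I.filter (fun p => ∃ z ∈ L, idx z = p)).image rep, ?_, ?_, ?_⟩
  · intro y hy
    simp only [Finset.coe_image, Set.mem_image, Finset.mem_coe, Finset.mem_filter] at hy
    obtain ⟨p, ⟨_, hp⟩, hyp⟩ := hy
    rw [hrep] at hyp
    simp only [dif_pos hp] at hyp
    rw [← hyp]
    exact hp.choose_spec.1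
  · have h1 : ((I.filter (fun p => ∃ z ∈ L, idx z = p)).image rep).card ≤ I.card :=
      le_trans (Finset.card_image_le) (Finset.card_filter_le _ _)
    have h2 : I.card = (Finset.Icc (-M) M).card * (Finset.Icc (-M) M).card := by
      rw [hI, Finset.card_product]
    have h3 : (Finset.Icc (-M) M).card = (2*M + 1).toNat := by
      rw [Int.card_Icc]; congr 1; ring
    have h4 : ((2*M+1).toNat : ℝ) ≤ 2*R/h + 3 := by
      have hc : ((2*M+1).toNat : ℤ) = 2*M+1 := Int.toNat_of_nonneg (by omega)
      have hc2 : ((2*M+1).toNat : ℝ) = 2*(M:ℝ)+1 := by exact_mod_cast hc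
      have h5 : (M:ℝ) < R/h + 1 := Int.ceil_lt_add_one _
      rw [hc2]
      have h6 : 2*(R/h) = 2*R/h := by ring
      linarith
    calc (((I.filter (fun p => ∃ z ∈ L, idx z = p)).image rep).card : ℝ)
        ≤ (I.card : ℝ) := by exact_mod_cast h1
      _ = ((2*M+1).toNat : ℝ) * ((2*M+1).toNat : ℝ) := by rw [h2, h3]; push_cast; ring
      _ ≤ (2*R/h + 3) * (2*R/h + 3) := by
          have h0 : (0:ℝ) ≤ ((2*M+1).toNat : ℝ) := Nat.cast_nonneg _
          nlinarith
      _ = (2*R/h + 3)^2 := by ring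
  · intro z hz
    have hzR := hLR z hz
    have hre := floor_div_bounds hh (le_trans (Complex.abs_re_le_norm z) hzR)
    have him := floor_div_bounds hh (le_trans (Complex.abs_im_le_norm z) hzR)
    have hmemI : idx z ∈ I := by
      rw [hI, Finset.mem_product]
      constructor <;> rw [Finset.mem_Icc]
      · exact ⟨hre.1, hre.2⟩
      · exact ⟨him.1, him.2⟩
    have hp : ∃ z' ∈ L, idx z' = idx z := ⟨z, hz, rfl⟩
    set y : ℂ := rep (idx z) with hy
    have hyval : y = hp.choose := by rw [hy, hrep]; simp only [dif_pos hp]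
    have hyL : y ∈ L := by rw [hyval]; exact hp.choose_spec.1
    have hyidx : idx y = idx z := by rw [hyval]; exact hp.choose_spec.2
    refine ⟨y, ?_, ?_⟩
    · apply Finset.mem_image_of_mem
      rw [Finset.mem_filter]
      exact ⟨hmemI, hp⟩
    · have hfre : ⌊z.re/h⌋ = ⌊y.re/h⌋ := by
        have := congrArg Prod.fst hyidx
        simp only [hidx] at this
        exact this.symm
      have hfim : ⌊z.im/h⌋ = ⌊y.im/h⌋ := by
        have := congrArg Prod.snd hyidx
        simp only [hidx] at this
        exact this.symm
      have h1 : |z.re - y.re| ≤ h := abs_sub_le_of_floor_div_eq hh hfre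
      have h2 : |z.im - y.im| ≤ h := abs_sub_le_of_floor_div_eq hh hfim
      calc ‖z - y‖ ≤ |(z-y).re| + |(z-y).im| := Complex.norm_le_abs_re_add_abs_im _
        _ = |z.re - y.re| + |z.im - y.im| := by rw [Complex.sub_re, Complex.sub_im]
        _ ≤ 2*h := by linarith

theorem statement5
    {Ω : Type*} [MeasurableSpace Ω] (P : Measure Ω) [IsProbabilityMeasure P]
    (μ : Measure ℂ) [IsProbabilityMeasure μ] (hS : IsCompact (msupport μ))
    (hD : AssumptionD μ)
    (X : ℕ → Ω → ℂ) (hmeas : ∀ i, Measurable (X i))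
    (hid : ∀ i, Measure.map (X i) P = μ)
    (hindep : iIndepFun X P)
    (m : ℝ) (hm : 0 < m)
    (L : Set ℂ) (hL : IsCompact L) (hLsub : L ⊆ {z : ℂ | m ≤ logPot μ z}) :
    ∃ c₀ > (0 : ℝ), ∃ c > (0 : ℝ), ∀ᶠ n : ℕ in atTop,
      1 - ENNReal.ofReal (Real.exp (-c * n)) ≤
        P {ω | lemniscate X n ω ∩ L ⊆
          ⋃ k ∈ Finset.range n, Metric.ball (X k ω) (Real.exp (-c₀ * n))} := by
  classical
  obtain ⟨C0, ε, hε, hDball⟩ := hD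
  set C : ℝ := max C0 1 with hC
  have hC1 : 1 ≤ C := le_max_right _ _
  have hDball' : ∀ z : ℂ, ∀ r : ℝ, 0 < r → μ (Metric.ball z r) ≤ ENNReal.ofReal (C * r ^ ε) := by
    intro z r hr
    refine le_trans (hDball z r hr) (ENNReal.ofReal_le_ofReal ?_)
    have : (0:ℝ) < r ^ ε := Real.rpow_pos_of_pos hr ε
    nlinarith [le_max_left C0 1]
  -- radii
  obtain ⟨R₁', hR₁'⟩ := (Metric.isBounded_iff_subset_closedBall 0).mp hL.isBounded
  set R₁ : ℝ := max R₁' 1 with hR₁def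
  have hR₁pos : (0:ℝ) < R₁ := lt_of_lt_of_le one_pos (le_max_right _ _)
  have hLR₁ : ∀ z ∈ L, ‖z‖ ≤ R₁ := by
    intro z hz
    have := hR₁' hz
    rw [Metric.mem_closedBall, Complex.dist_eq, sub_zero] at this
    exact le_trans this (le_max_left _ _)
  obtain ⟨R₂', hR₂'⟩ := (Metric.isBounded_iff_subset_closedBall 0).mp hS.isBounded
  set R₂ : ℝ := max R₂' 0 with hR₂def
  set R : ℝ := R₁ + R₂ + 1 with hRdef
  have hR1 : 1 ≤ R := by
    have : (0:ℝ) ≤ R₂ := le_max_right _ _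
    simp only [hRdef]; linarith
  have haes : ∀ᵐ w ∂μ, w ∈ msupport μ := by
    rw [MeasureTheory.ae_iff]
    exact msupport_ae μ
  have hbd : ∀ z ∈ L, ∀ᵐ w ∂μ, ‖z - w‖ ≤ R := by
    intro z hz
    filter_upwards [haes] with w hw
    have hwR : ‖w‖ ≤ R₂ := by
      have := hR₂' hw
      rw [Metric.mem_closedBall, Complex.dist_eq, sub_zero] at this
      exact le_trans this (le_max_left _ _)
    calc ‖z - w‖ ≤ ‖z‖ + ‖w‖ := by
          simpa [sub_eq_add_neg] using norm_add_le z (-w)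
      _ ≤ R₁ + R₂ := add_le_add (hLR₁ z hz) hwR
      _ ≤ R := by simp only [hRdef]; linarith
  -- moment bound and uniform exponential moment
  obtain ⟨K, hK1, hmom⟩ := moment_bound μ hC1 hε hDball'
    (show (0:ℝ) < ε/2 by positivity) (by linarith)
  have hpot : ∀ z ∈ L, m ≤ ∫ w, Real.log (‖z - w‖) ∂μ := fun z hz => hLsub hz
  obtain ⟨lam, hlam0, hlamε, hunif⟩ := unif_moment μ hε hK1 hR1 hm L hmom hbd hpot
  -- constants
  set κ : ℝ := min (1/2) (m/8) with hκdef
  have hκ0 : 0 < κ := lt_min (by norm_num) (by positivity)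
  have hκhalf : κ ≤ 1/2 := min_le_left _ _
  have hκm : κ ≤ m/8 := min_le_right _ _
  set c₀ : ℝ := lam * m / 32 with hc₀def
  have hc₀ : 0 < c₀ := by positivity
  set c : ℝ := lam * m / 16 with hcdef
  have hc : 0 < c := by positivity
  set C₃ : ℝ := 4*R₁/κ + 3 with hC₃def
  have hC₃0 : 0 < C₃ := by positivity
  refine ⟨c₀, hc₀, c, hc, ?_⟩
  -- eventual domination of the net cardinality
  have htend : Tendsto (fun n : ℕ => Real.exp (lam*m/8 * n)) atTop atTop := by
    apply Real.tendsto_exp_atTop.comp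
    apply Tendsto.const_mul_atTop (show (0:ℝ) < lam*m/8 by positivity)
    exact tendsto_natCast_atTop_atTop
  filter_upwards [htend.eventually_ge_atTop (C₃^2)] with n hn
  -- per-n setup
  set δ : ℝ := Real.exp (-c₀ * n) with hδdef
  have hδ0 : 0 < δ := Real.exp_pos _
  set ρ : ℝ := κ * δ with hρdef
  have hρ0 : 0 < ρ := by positivity
  obtain ⟨t, htL, htcard, htcover⟩ := net_exists L hR₁pos (show (0:ℝ) < ρ/2 by positivity) hLR₁
  -- bad event
  set Bad : Set Ω := ⋃ y ∈ t,
    {ω | ∑ k ∈ Finset.range n, Real.log (‖y - X k ω‖) < n * m / 4} with hBaddef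
  -- the deterministic inclusion
  have hdet : ∀ ω, ω ∉ Bad → lemniscate X n ω ∩ L ⊆
      ⋃ k ∈ Finset.range n, Metric.ball (X k ω) (Real.exp (-c₀ * n)) := by
    intro ω hω z hzmem
    obtain ⟨hzlem, hzL⟩ := hzmem
    by_contra hno
    simp only [Set.mem_iUnion, not_exists] at hno
    have hfar : ∀ k ∈ Finset.range n, δ ≤ ‖z - X k ω‖ := by
      intro k hk
      have h1 := hno k hk
      rw [Metric.mem_ball, Complex.dist_eq] at h1
      rw [hδdef]
      linarith [not_lt.mp h1]
    obtain ⟨y, hyt, hyz⟩ := htcover z hzL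
    have hρy : ‖z - y‖ ≤ ρ := by
      have h2 : 2 * (ρ/2) = ρ := by ring
      rw [← h2]; exact hyz
    have hρδ : ρ ≤ δ/2 := by rw [hρdef]; nlinarith
    -- per-k log comparison
    have hcomp : ∀ k ∈ Finset.range n,
        |Real.log (‖z - X k ω‖) - Real.log (‖y - X k ω‖)| ≤ m/4 := by
      intro k hk
      have ha := hfar k hk
      have habs : |‖z - X k ω‖ - ‖y - X k ω‖| ≤ ‖z - y‖ := by
        have h3 := abs_norm_sub_norm_le (z - X k ω) (y - X k ω)
        simpa [sub_sub_sub_cancel_right] using h3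
      have hb : δ/2 ≤ ‖y - X k ω‖ := by
        have h1 : ‖z - X k ω‖ - ‖y - X k ω‖ ≤ ρ :=
          le_trans (le_abs_self _) (le_trans habs hρy)
        linarith
      have ha' : δ/2 ≤ ‖z - X k ω‖ := by linarith
      have hlip := abs_log_sub_log_le ha' hb (show (0:ℝ) < δ/2 by positivity)
      have h4 : |‖z - X k ω‖ - ‖y - X k ω‖| / (δ/2) ≤ ρ / (δ/2) := by
        gcongr
        exact le_trans habs hρy
      have h5 : ρ / (δ/2) = 2*κ := by
        rw [hρdef]; field_simp
      have h6 : 2*κ ≤ m/4 := by linarith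
      calc |Real.log (‖z - X k ω‖) - Real.log (‖y - X k ω‖)|
          ≤ |‖z - X k ω‖ - ‖y - X k ω‖| / (δ/2) := hlip
        _ ≤ ρ / (δ/2) := h4
        _ = 2*κ := h5
        _ ≤ m/4 := h6
    -- the sum at z is negative
    have hpos : ∀ k ∈ Finset.range n, (0:ℝ) < ‖z - X k ω‖ :=
      fun k hk => lt_of_lt_of_le hδ0 (hfar k hk)
    have hSz : ∑ k ∈ Finset.range n, Real.log (‖z - X k ω‖) < 0 := by
      have habsprod : ‖∏ k ∈ Finset.range n, (z - X k ω)‖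
          = ∏ k ∈ Finset.range n, ‖z - X k ω‖ := norm_prod _ _
      have hprodpos : (0:ℝ) < ∏ k ∈ Finset.range n, ‖z - X k ω‖ :=
        Finset.prod_pos hpos
      have hlt1 : ∏ k ∈ Finset.range n, ‖z - X k ω‖ < 1 := by
        rw [← habsprod]; exact hzlem
      have hlogneg := Real.log_neg hprodpos hlt1
      rwa [Real.log_prod (fun k hk => (hpos k hk).ne')] at hlogneg
    -- hence the sum at y is < n*m/4
    have hSy : ∑ k ∈ Finset.range n, Real.log (‖y - X k ω‖) < n * m / 4 := by
      have hsum : ∑ k ∈ Finset.range n, Real.log (‖y - X k ω‖)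
          ≤ ∑ k ∈ Finset.range n, (Real.log (‖z - X k ω‖) + m/4) := by
        apply Finset.sum_le_sum
        intro k hk
        have := hcomp k hk
        have h7 := abs_le.mp this
        linarith [h7.1]
      have heq : ∑ k ∈ Finset.range n, (Real.log (‖z - X k ω‖) + m/4)
          = (∑ k ∈ Finset.range n, Real.log (‖z - X k ω‖)) + n * (m/4) := by
        rw [Finset.sum_add_distrib, Finset.sum_const, Finset.card_range, nsmul_eq_mul]
      rw [heq] at hsum
      calc ∑ k ∈ Finset.range n, Real.log (‖y - X k ω‖)
          ≤ (∑ k ∈ Finset.range n, Real.log (‖z - X k ω‖)) + n * (m/4) := hsum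
        _ < 0 + n * (m/4) := by linarith
        _ ≤ n * m / 4 := le_of_eq (by ring)
    -- contradiction with ω ∉ Bad
    apply hω
    rw [hBaddef]
    exact Set.mem_biUnion hyt hSy
  -- probability estimate
  have hE1 : (1:ℝ) ≤ Real.exp (c₀ * n) := Real.one_le_exp (by positivity)
  have hcard2 : (t.card : ℝ) ≤ C₃^2 * Real.exp (c₀*n) * Real.exp (c₀*n) := by
    have h1 : 2*R₁/(ρ/2) + 3 = 4*R₁/κ * Real.exp (c₀*n) + 3 := by
      rw [hρdef, hδdef]
      have he : Real.exp (-c₀*(n:ℝ)) = (Real.exp (c₀*(n:ℝ)))⁻¹ := by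
        rw [← Real.exp_neg]; ring_nf
      rw [he]
      have hκne : κ ≠ 0 := ne_of_gt hκ0
      have hene : Real.exp (c₀*(n:ℝ)) ≠ 0 := ne_of_gt (Real.exp_pos _)
      field_simp
      ring
    have h2 : 4*R₁/κ * Real.exp (c₀*n) + 3 ≤ C₃ * Real.exp (c₀*n) := by
      rw [hC₃def]
      have h3 : (0:ℝ) ≤ 4*R₁/κ := by positivity
      nlinarith
    have h4 : (t.card : ℝ) ≤ (2*R₁/(ρ/2) + 3)^2 := htcard
    have h5 : (0:ℝ) ≤ C₃ * Real.exp (c₀*n) := by positivity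
    have h6 : (2*R₁/(ρ/2) + 3)^2 ≤ (C₃ * Real.exp (c₀*n))^2 := by
      have h7 : (0:ℝ) ≤ 2*R₁/(ρ/2) + 3 := by positivity
      have h8 : 2*R₁/(ρ/2) + 3 ≤ C₃ * Real.exp (c₀*n) := le_trans (le_of_eq h1) h2
      nlinarith
    calc (t.card : ℝ) ≤ (2*R₁/(ρ/2) + 3)^2 := h4
      _ ≤ (C₃ * Real.exp (c₀*n))^2 := h6
      _ = C₃^2 * Real.exp (c₀*n) * Real.exp (c₀*n) := by ring
  have hBadP : P Bad ≤ ENNReal.ofReal (Real.exp (-c * n)) := by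
    calc P Bad ≤ ∑ y ∈ t, P {ω | ∑ k ∈ Finset.range n,
          Real.log (‖y - X k ω‖) < n * m / 4} := measure_biUnion_finset_le t _
      _ ≤ ∑ _y ∈ t, ENNReal.ofReal (Real.exp (-(lam * m / 4) * n)) := by
          apply Finset.sum_le_sum
          intro y hy
          exact chernoff_pt P μ X hmeas hid hindep hlam0 y (hunif y (htL hy)) n
      _ = (t.card : ℝ≥0∞) * ENNReal.ofReal (Real.exp (-(lam * m / 4) * n)) := by
          rw [Finset.sum_const, nsmul_eq_mul]
      _ = ENNReal.ofReal ((t.card : ℝ) * Real.exp (-(lam * m / 4) * n)) := by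
          rw [ENNReal.ofReal_mul (Nat.cast_nonneg _), ENNReal.ofReal_natCast]
      _ ≤ ENNReal.ofReal (Real.exp (-c * n)) := by
          apply ENNReal.ofReal_le_ofReal
          calc (t.card : ℝ) * Real.exp (-(lam * m / 4) * n)
              ≤ (C₃^2 * Real.exp (c₀*n) * Real.exp (c₀*n)) * Real.exp (-(lam * m / 4) * n) := by
                exact mul_le_mul_of_nonneg_right hcard2 (Real.exp_pos _).le
            _ ≤ (Real.exp (lam*m/8 * n) * Real.exp (c₀*n) * Real.exp (c₀*n))
                  * Real.exp (-(lam * m / 4) * n) := by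
                gcongr
            _ = Real.exp (lam*m/8 * n + c₀*n + c₀*n + -(lam * m / 4) * n) := by
                rw [← Real.exp_add, ← Real.exp_add, ← Real.exp_add]
            _ = Real.exp (-c * n) := by
                congr 1
                rw [hc₀def, hcdef]
                ring
  -- conclude
  rw [tsub_le_iff_right]
  have huniv : (1:ℝ≥0∞) ≤ P {ω | lemniscate X n ω ∩ L ⊆
      ⋃ k ∈ Finset.range n, Metric.ball (X k ω) (Real.exp (-c₀ * n))} + P Bad := by
    have hsub : (Set.univ : Set Ω) ⊆ {ω | lemniscate X n ω ∩ L ⊆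
        ⋃ k ∈ Finset.range n, Metric.ball (X k ω) (Real.exp (-c₀ * n))} ∪ Bad := by
      intro ω _
      by_cases hω : ω ∈ Bad
      · exact Or.inr hω
      · exact Or.inl (hdet ω hω)
    calc (1:ℝ≥0∞) = P Set.univ := (measure_univ).symm
      _ ≤ P ({ω | lemniscate X n ω ∩ L ⊆
          ⋃ k ∈ Finset.range n, Metric.ball (X k ω) (Real.exp (-c₀ * n))} ∪ Bad) :=
            measure_mono hsub
      _ ≤ _ := measure_union_le _ _
  exact le_trans huniv (add_le_add_right hBadP _)
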